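/- Let F be a finite field with |F| = Q and char(F) = 2, let M ∈ GL(2, F) have irreducible characteristic polynomial over F and multiplicative order Q² − 1, and set H̄ = ⟨M^{Q−1}⟩. Then H̄ acts regularly on the set of all 1-dimensional subspaces of F²: for any two lines l, l′ of F² there is exactly one A ∈ H̄ with l·A = l′; in particular the action is transitive and all stabilizers are trivial. -/

import Mathlib

open Module

/-- The action of `A ∈ GL(n, F)` on subspaces of `F^n`: `U · A` is the image of `U`
under the invertible linear map given by the matrix `A`. -/
noncomputable def mapGL {F : Type*} [Field F] {n : ℕ}
    (A : GL (Fin n) F) (U : Submodule F (Fin n → F)) : Submodule F (Fin n → F) :=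
  U.map (Matrix.toLin' (A : Matrix (Fin n) (Fin n) F))

section Aux

set_option linter.unusedSectionVars false

variable {F : Type*} [Field F]

lemma aux_mapGL_mul {n : ℕ} (A B : GL (Fin n) F) (l : Submodule F (Fin n → F)) :
    mapGL (A * B) l = mapGL A (mapGL B l) := by
  unfold mapGL
  rw [Units.val_mul, Matrix.toLin'_mul, Submodule.map_comp]

lemma aux_mapGL_one {n : ℕ} (l : Submodule F (Fin n → F)) : mapGL (1 : GL (Fin n) F) l = l := by
  unfold mapGL
  rw [Units.val_one, Matrix.toLin'_one, Submodule.map_id]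

lemma aux_mapGL_finrank {n : ℕ} (A : GL (Fin n) F) (l : Submodule F (Fin n → F)) :
    finrank F (mapGL A l) = finrank F l := by
  let e : (Fin n → F) ≃ₗ[F] (Fin n → F) :=
    LinearEquiv.ofLinear (Matrix.toLin' (A : Matrix (Fin n) (Fin n) F))
      (Matrix.toLin' ((A⁻¹ : GL (Fin n) F) : Matrix (Fin n) (Fin n) F))
      (by rw [← Matrix.toLin'_mul, ← Units.val_mul, mul_inv_cancel, Units.val_one,
        Matrix.toLin'_one])
      (by rw [← Matrix.toLin'_mul, ← Units.val_mul, inv_mul_cancel, Units.val_one,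
        Matrix.toLin'_one])
  exact LinearEquiv.finrank_map_eq e l

/-- The lines of `F²`, indexed by `Option F`. -/
noncomputable def auxLineOf (o : Option F) : Submodule F (Fin 2 → F) :=
  match o with
  | none => Submodule.span F {![0, 1]}
  | some t => Submodule.span F {![1, t]}

lemma auxLineOf_finrank (o : Option F) : finrank F (auxLineOf o) = 1 := by
  cases o with
  | none =>
    refine finrank_span_singleton ?_
    intro h
    have := congrFun h 1
    simp at this
  | some t =>
    refine finrank_span_singleton ?_
    intro h
    have := congrFun h 0
    simp at this

lemma auxLineOf_bijective :
    Function.Bijective (fun o : Option F => (⟨auxLineOf o, auxLineOf_finrank o⟩ :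
      {l : Submodule F (Fin 2 → F) // finrank F l = 1})) := by
  constructor
  · intro o o' h
    simp only [Subtype.mk.injEq] at h
    match o, o' with
    | none, none => rfl
    | some t, some t' =>
      have hmem : (![1, t] : Fin 2 → F) ∈ Submodule.span F {![1, t']} := by
        rw [show Submodule.span F {![1, t']} = auxLineOf (some t') from rfl, ← h]
        exact Submodule.mem_span_singleton_self _
      obtain ⟨c, hc⟩ := Submodule.mem_span_singleton.mp hmem
      have h0 := congrFun hc 0
      have h1 := congrFun hc 1
      simp at h0 h1
      subst h0
      simp at h1
      rw [h1]
    | some t, none =>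
      exfalso
      have hmem : (![1, t] : Fin 2 → F) ∈ Submodule.span F {![0, 1]} := by
        rw [show Submodule.span F {![0,1]} = auxLineOf none from rfl, ← h]
        exact Submodule.mem_span_singleton_self _
      obtain ⟨c, hc⟩ := Submodule.mem_span_singleton.mp hmem
      have h0 := congrFun hc 0
      simp at h0
    | none, some t =>
      exfalso
      have hmem : (![0, 1] : Fin 2 → F) ∈ Submodule.span F {![1, t]} := by
        rw [show Submodule.span F {![1,t]} = auxLineOf (some t) from rfl, ← h]
        exact Submodule.mem_span_singleton_self _
      obtain ⟨c, hc⟩ := Submodule.mem_span_singleton.mp hmem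
      have h0 := congrFun hc 0
      have h1 := congrFun hc 1
      simp at h0
      rw [h0] at h1
      simp at h1
  · rintro ⟨l, hl⟩
    have hbot : l ≠ ⊥ := by
      intro h'
      rw [h', finrank_bot] at hl
      omega
    obtain ⟨v, hvl, hv0⟩ := l.ne_bot_iff.mp hbot
    have hspan : l = Submodule.span F {v} := by
      have hle : Submodule.span F {v} ≤ l := Submodule.span_le.mpr (by simpa)
      exact (Submodule.eq_of_le_of_finrank_le hle
        (by rw [hl, finrank_span_singleton hv0])).symm
    by_cases h0 : v 0 = 0
    · refine ⟨none, ?_⟩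
      have hv1 : v 1 ≠ 0 := by
        intro h1
        apply hv0
        funext i
        fin_cases i <;> simp [h0, h1]
      apply Subtype.ext
      show auxLineOf none = l
      rw [hspan]
      unfold auxLineOf
      have : v = v 1 • ![0, 1] := by
        funext i
        fin_cases i <;> simp [h0]
      conv_rhs => rw [this]
      rw [Submodule.span_singleton_smul_eq (IsUnit.mk0 (v 1) hv1) _]
    · refine ⟨some ((v 0)⁻¹ * v 1), ?_⟩
      apply Subtype.ext
      show auxLineOf (some ((v 0)⁻¹ * v 1)) = l
      rw [hspan]
      unfold auxLineOf
      have : v = v 0 • ![1, (v 0)⁻¹ * v 1] := by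
        funext i
        fin_cases i
        · simp
        · simp [← mul_assoc, mul_inv_cancel₀ h0]
      conv_rhs => rw [this]
      rw [Submodule.span_singleton_smul_eq (IsUnit.mk0 (v 0) h0) _]

lemma aux_eval_charpoly {n : Type*} [Fintype n] [DecidableEq n]
    (M : Matrix n n F) (c : F) :
    M.charpoly.eval c = (c • (1 : Matrix n n F) - M).det := by
  rw [Matrix.charpoly, ← Polynomial.coe_evalRingHom, RingHom.map_det]
  congr 1
  ext i j
  by_cases h : i = j
  · subst h
    simp [Matrix.charmatrix_apply_eq, Matrix.one_apply, Matrix.smul_apply, Matrix.sub_apply]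
  · simp [Matrix.charmatrix_apply_ne _ _ _ h, Matrix.one_apply_ne h, Matrix.smul_apply,
      Matrix.sub_apply]

lemma aux_no_eigen (M : GL (Fin 2) F)
    (hirr : Irreducible (Matrix.charpoly (M : Matrix (Fin 2) (Fin 2) F)))
    (c : F) (v : Fin 2 → F)
    (hv : (M : Matrix (Fin 2) (Fin 2) F).mulVec v = c • v) : v = 0 := by
  by_contra h0
  have hdet : (c • (1 : Matrix (Fin 2) (Fin 2) F) - (M : Matrix (Fin 2) (Fin 2) F)).det = 0 := by
    rw [← Matrix.exists_mulVec_eq_zero_iff]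
    refine ⟨v, h0, ?_⟩
    rw [Matrix.sub_mulVec, Matrix.smul_mulVec, Matrix.one_mulVec, hv, sub_self]
  have hroot : (Matrix.charpoly (M : Matrix (Fin 2) (Fin 2) F)).IsRoot c := by
    rw [Polynomial.IsRoot, aux_eval_charpoly, hdet]
  have hdeg : (Matrix.charpoly (M : Matrix (Fin 2) (Fin 2) F)).natDegree = 2 := by
    rw [Matrix.charpoly_natDegree_eq_dim, Fintype.card_fin]
  obtain ⟨q, hq⟩ := Polynomial.dvd_iff_isRoot.mpr hroot
  have hq0 : q ≠ 0 := by
    intro h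
    rw [h, mul_zero] at hq
    exact (Matrix.charpoly_monic _).ne_zero hq
  rcases hirr.isUnit_or_isUnit hq with h | h
  · exact Polynomial.not_isUnit_X_sub_C c h
  · have := Polynomial.natDegree_eq_zero_of_isUnit h
    rw [hq, Polynomial.natDegree_mul (Polynomial.X_sub_C_ne_zero c) hq0,
      Polynomial.natDegree_X_sub_C, this] at hdeg
    omega

lemma aux_pow_mulVec {n : Type*} [Fintype n] [DecidableEq n]
    (a : Matrix n n F) (v : n → F) (c : F) (h : a.mulVec v = c • v) (k : ℕ) :
    (a ^ k).mulVec v = c ^ k • v := by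
  induction k with
  | zero => simp [Matrix.one_mulVec]
  | succ k ih =>
    rw [pow_succ, ← Matrix.mulVec_mulVec, h, Matrix.mulVec_smul, ih, smul_smul, pow_succ]
    ring_nf

variable [Fintype F]

lemma aux_orderOf (M : GL (Fin 2) F)
    (hord : orderOf M = Fintype.card F ^ 2 - 1) :
    orderOf (M ^ (Fintype.card F - 1)) = Fintype.card F + 1 := by
  set Q := Fintype.card F with hQdef
  have hQ2 : 2 ≤ Q := Fintype.one_lt_card
  rw [orderOf_pow, hord]
  have h1 : Q ^ 2 - 1 = (Q - 1) * (Q + 1) := by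
    have := sq_tsub_sq Q 1
    rw [one_pow] at this
    rw [this, mul_comm]
  rw [h1, Nat.gcd_eq_right ⟨Q + 1, rfl⟩, Nat.mul_div_cancel_left _ (by omega)]

/-- Freeness: a member of the Singer subgroup fixing a line is the identity. -/
lemma aux_free (hchar : ringChar F = 2) (M : GL (Fin 2) F)
    (hirr : Irreducible (Matrix.charpoly (M : Matrix (Fin 2) (Fin 2) F)))
    (hord : orderOf M = Fintype.card F ^ 2 - 1)
    (A : GL (Fin 2) F) (hA : A ∈ Subgroup.zpowers (M ^ (Fintype.card F - 1)))
    (l : Submodule F (Fin 2 → F)) (hl : finrank F l = 1) (hfix : mapGL A l = l) :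
    A = 1 := by
  set Q := Fintype.card F with hQdef
  have hQ2 : 2 ≤ Q := Fintype.one_lt_card
  have hQe : Q % 2 = 0 := FiniteField.even_card_of_char_two hchar
  set N := M ^ (Q - 1) with hNdef
  have hordN : orderOf N = Q + 1 := aux_orderOf M hord
  obtain ⟨k, hk'⟩ := mem_powers_iff_mem_zpowers.mpr hA
  have hk : N ^ k = A := hk'
  have hAQ1 : A ^ (Q + 1) = 1 := by
    rw [← hk, ← pow_mul, mul_comm k (Q+1), pow_mul, ← hordN, pow_orderOf_eq_one, one_pow]
  have hbot : l ≠ ⊥ := by intro h'; rw [h', finrank_bot] at hl; omega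
  obtain ⟨v, hvl, hv0⟩ := l.ne_bot_iff.mp hbot
  have hspan : l = Submodule.span F {v} := by
    have hle : Submodule.span F {v} ≤ l := Submodule.span_le.mpr (by simpa)
    exact (Submodule.eq_of_le_of_finrank_le hle
      (by rw [hl, finrank_span_singleton hv0])).symm
  have hmem : (A : Matrix (Fin 2) (Fin 2) F).mulVec v ∈ Submodule.span F {v} := by
    have : mapGL A (Submodule.span F {v}) = Submodule.span F {v} := by rw [← hspan]; exact hfix
    rw [← this]
    unfold mapGL
    rw [Submodule.map_span, Set.image_singleton, Matrix.toLin'_apply]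
    exact Submodule.mem_span_singleton_self _
  obtain ⟨c, hc⟩ := Submodule.mem_span_singleton.mp hmem
  have hc' : (A : Matrix (Fin 2) (Fin 2) F).mulVec v = c • v := hc.symm
  have hc0 : c ≠ 0 := by
    intro h
    apply hv0
    have hz : (A : Matrix (Fin 2) (Fin 2) F).mulVec v = 0 := by rw [hc', h, zero_smul]
    have h1 : ((A⁻¹ : GL (Fin 2) F) : Matrix (Fin 2) (Fin 2) F)
        * (A : Matrix (Fin 2) (Fin 2) F) = 1 := by
      rw [← Units.val_mul, inv_mul_cancel, Units.val_one]
    calc v = (((A⁻¹ : GL (Fin 2) F) : Matrix (Fin 2) (Fin 2) F)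
          * (A : Matrix (Fin 2) (Fin 2) F)).mulVec v := by rw [h1, Matrix.one_mulVec]
      _ = 0 := by rw [← Matrix.mulVec_mulVec, hz, Matrix.mulVec_zero]
  let S : Subgroup (GL (Fin 2) F) :=
    { carrier := {B | (B : Matrix (Fin 2) (Fin 2) F).mulVec v = v}
      one_mem' := by
        show ((1 : GL (Fin 2) F) : Matrix (Fin 2) (Fin 2) F).mulVec v = v
        rw [Units.val_one, Matrix.one_mulVec]
      mul_mem' := by
        intro a b ha hb
        show ((a * b : GL (Fin 2) F) : Matrix (Fin 2) (Fin 2) F).mulVec v = v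
        rw [Units.val_mul, ← Matrix.mulVec_mulVec, hb, ha]
      inv_mem' := by
        intro a ha
        show ((a⁻¹ : GL (Fin 2) F) : Matrix (Fin 2) (Fin 2) F).mulVec v = v
        conv_lhs => rw [← ha]
        rw [Matrix.mulVec_mulVec, ← Units.val_mul, inv_mul_cancel, Units.val_one,
          Matrix.one_mulVec] }
  have hS1 : A ^ (Q - 1) ∈ S := by
    show ((A ^ (Q - 1) : GL (Fin 2) F) : Matrix (Fin 2) (Fin 2) F).mulVec v = v
    rw [Units.val_pow_eq_pow_val, aux_pow_mulVec _ _ _ hc',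
      FiniteField.pow_card_sub_one_eq_one c hc0, one_smul]
  have hS2 : A ^ (Q + 1) ∈ S := by rw [hAQ1]; exact S.one_mem
  have hcop : Nat.Coprime (Q - 1) (Q + 1) := by
    have hd2 : Nat.gcd (Q - 1) (Q + 1) ∣ 2 := by
      have := Nat.dvd_sub (Nat.gcd_dvd_right (Q-1) (Q+1)) (Nat.gcd_dvd_left (Q-1) (Q+1))
      simpa [show Q + 1 - (Q - 1) = 2 by omega] using this
    rcases (Nat.prime_two.eq_one_or_self_of_dvd _ hd2) with h | h
    · exact h
    · exfalso
      have := Nat.gcd_dvd_left (Q-1) (Q+1)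
      rw [h] at this
      omega
  have hbez : ((Q - 1 : ℕ) : ℤ) * Nat.gcdA (Q - 1) (Q + 1)
      + ((Q + 1 : ℕ) : ℤ) * Nat.gcdB (Q - 1) (Q + 1) = 1 := by
    have := Nat.gcd_eq_gcd_ab (Q - 1) (Q + 1)
    rw [hcop] at this
    exact_mod_cast this.symm
  have hAS : A ∈ S := by
    have : A = (A ^ (Q - 1)) ^ (Nat.gcdA (Q - 1) (Q + 1))
        * (A ^ (Q + 1)) ^ (Nat.gcdB (Q - 1) (Q + 1)) := by
      rw [← zpow_natCast A (Q - 1), ← zpow_natCast A (Q + 1), ← zpow_mul, ← zpow_mul,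
        ← zpow_add, hbez, zpow_one]
    rw [this]
    exact S.mul_mem (S.zpow_mem hS1 _) (S.zpow_mem hS2 _)
  have hAv : (A : Matrix (Fin 2) (Fin 2) F).mulVec v = v := hAS
  set a : Matrix (Fin 2) (Fin 2) F := (A : Matrix (Fin 2) (Fin 2) F) with hadef
  let E : Submodule F (Fin 2 → F) := LinearMap.ker (Matrix.toLin' (a - 1))
  have hmemE : ∀ w, w ∈ E ↔ a.mulVec w = w := by
    intro w
    rw [LinearMap.mem_ker, Matrix.toLin'_apply, Matrix.sub_mulVec, Matrix.one_mulVec,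
      sub_eq_zero]
  have hcomm : Commute a (M : Matrix (Fin 2) (Fin 2) F) := by
    have : A = M ^ ((Q - 1) * k) := by rw [pow_mul, ← hNdef, hk]
    rw [hadef, this, Units.val_pow_eq_pow_val]
    exact (Commute.refl _).pow_left _
  have hInv : ∀ w ∈ E, (M : Matrix (Fin 2) (Fin 2) F).mulVec w ∈ E := by
    intro w hw
    rw [hmemE] at hw ⊢
    rw [Matrix.mulVec_mulVec, hcomm.eq, ← Matrix.mulVec_mulVec, hw]
  have hvE : v ∈ E := (hmemE v).mpr hAv
  have hE1 : 1 ≤ finrank F E := by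
    have hle : Submodule.span F {v} ≤ E := Submodule.span_le.mpr (by simpa using hvE)
    have := Submodule.finrank_mono hle
    rwa [finrank_span_singleton hv0] at this
  have hE2 : finrank F E ≤ 2 := by
    have := Submodule.finrank_le E
    rwa [show finrank F (Fin 2 → F) = 2 by simp] at this
  interval_cases h : finrank F E
  · exfalso
    have hbotE : E ≠ ⊥ := by intro h'; rw [h', finrank_bot] at h; omega
    obtain ⟨w, hwE, hw0⟩ := E.ne_bot_iff.mp hbotE
    have hspanE : E = Submodule.span F {w} := by
      have hle : Submodule.span F {w} ≤ E := Submodule.span_le.mpr (by simpa)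
      exact (Submodule.eq_of_le_of_finrank_le hle
        (by rw [h, finrank_span_singleton hw0])).symm
    have : (M : Matrix (Fin 2) (Fin 2) F).mulVec w ∈ Submodule.span F {w} := by
      rw [← hspanE]; exact hInv w hwE
    obtain ⟨c', hc'⟩ := Submodule.mem_span_singleton.mp this
    exact hw0 (aux_no_eigen M hirr c' w hc'.symm)
  · have hEtop : E = ⊤ := Submodule.eq_top_of_finrank_eq (by rw [h]; simp)
    have hforall : ∀ w, a.mulVec w = w := by
      intro w
      exact (hmemE w).mp (hEtop ▸ Submodule.mem_top)
    apply Units.ext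
    show a = 1
    apply Matrix.toLin'.injective
    apply LinearMap.ext
    intro w
    rw [Matrix.toLin'_apply, Matrix.toLin'_one, hforall w, LinearMap.id_apply]

end Aux

/-- Let `F` be a finite field with `|F| = Q` of characteristic `2`,
`M ∈ GL(2, F)` a Singer cycle (irreducible characteristic polynomial and order `Q² − 1`),
and `H̄ = ⟨M^{Q−1}⟩`. Then `H̄` acts regularly on the lines of `F²`: for any lines `l, l′`
there is exactly one `A ∈ H̄` with `l·A = l′`. -/
theorem singer_subgroup_regular_on_lines_char_two
    {F : Type*} [Field F] [Fintype F] (hchar : ringChar F = 2)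
    (M : GL (Fin 2) F)
    (hirr : Irreducible (Matrix.charpoly (M : Matrix (Fin 2) (Fin 2) F)))
    (hord : orderOf M = Fintype.card F ^ 2 - 1) :
    ∀ l l' : Submodule F (Fin 2 → F), finrank F l = 1 → finrank F l' = 1 →
      ∃! A : GL (Fin 2) F,
        A ∈ Subgroup.zpowers (M ^ (Fintype.card F - 1)) ∧ mapGL A l = l' := by
  intro l l' hl hl'
  classical
  set Q := Fintype.card F with hQdef
  set N := M ^ (Q - 1) with hNdef
  haveI : Finite (Submodule F (Fin 2 → F)) :=
    Finite.of_injective (fun p => (p : Set (Fin 2 → F))) SetLike.coe_injective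
  have cancel : ∀ A B : GL (Fin 2) F, A ∈ Subgroup.zpowers N → B ∈ Subgroup.zpowers N →
      mapGL A l = mapGL B l → A = B := by
    intro A B hA hB h
    have hmem : B⁻¹ * A ∈ Subgroup.zpowers N :=
      Subgroup.mul_mem _ (Subgroup.inv_mem _ hB) hA
    have hfix : mapGL (B⁻¹ * A) l = l := by
      rw [aux_mapGL_mul, h, ← aux_mapGL_mul, inv_mul_cancel, aux_mapGL_one]
    have h1 := aux_free hchar M hirr hord _ hmem l hl hfix
    rw [inv_mul_eq_one] at h1
    exact h1.symm
  let φ : Subgroup.zpowers N → {x : Submodule F (Fin 2 → F) // finrank F x = 1} :=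
    fun A => ⟨mapGL A.1 l, by rw [aux_mapGL_finrank]; exact hl⟩
  have hinj : Function.Injective φ := by
    intro A B h
    exact Subtype.ext (cancel A.1 B.1 A.2 B.2 (congrArg Subtype.val h))
  have hcardG : Nat.card (Subgroup.zpowers N) = Q + 1 := by
    rw [Nat.card_zpowers, aux_orderOf M hord]
  have hcardL : Nat.card {x : Submodule F (Fin 2 → F) // finrank F x = 1} = Q + 1 := by
    have := Nat.card_eq_of_bijective _ (auxLineOf_bijective (F := F))
    rw [Nat.card_eq_fintype_card, Fintype.card_option, ← hQdef] at this
    exact this.symm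
  have hbij : Function.Bijective φ :=
    (Nat.bijective_iff_injective_and_card φ).mpr ⟨hinj, by rw [hcardG, hcardL]⟩
  obtain ⟨A, hφA⟩ := hbij.2 ⟨l', hl'⟩
  refine ⟨A.1, ⟨A.2, congrArg Subtype.val hφA⟩, ?_⟩
  rintro B ⟨hB, hBl⟩
  refine cancel B A.1 hB A.2 ?_
  rw [hBl]
  exact (congrArg Subtype.val hφA).symm
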